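/- Let n be an integer and let a, b : ℤ → ℂ be two-sided sequences with ‖a‖_{n+2} + ‖a‖_{n-2} < ∞ and ‖b‖_{n+2} + ‖b‖_{n-2} < ∞, so that the product coefficients c_l := Σ_{j∈ℤ} a_j b_{l-j} are well defined. Then the nonnegative truncation satisfies ‖[c]₊‖_{n-1} ≤ 5 · (‖a‖_{n+2} + ‖a‖_{n-2}) · (‖b‖_{n+2} + ‖b‖_{n-2}). -/

import Mathlib

open scoped ENNReal

/-- The weighted ℓ²-norm `‖a‖ₙ = (Σ_{j∈ℤ} |a_j|² e^{2nj} / |Γ(j+1/2)|²)^{1/2} ∈ [0,∞]`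
of a two-sided sequence `a : ℤ → ℂ`. -/
noncomputable def wnorm (n : ℤ) (a : ℤ → ℂ) : ℝ≥0∞ :=
  (∑' j : ℤ, ENNReal.ofReal
      (‖a j‖ ^ 2 * Real.exp (2 * n * j) / ‖Complex.Gamma ((j : ℂ) + 1 / 2)‖ ^ 2)) ^ (1 / 2 : ℝ)

/-- The nonnegative truncation `[c]₊` of a two-sided sequence. -/
noncomputable def posTrunc (c : ℤ → ℂ) : ℤ → ℂ := fun l => if 0 ≤ l then c l else 0

open scoped NNReal

noncomputable def Gm (m : ℕ) : ℝ := Real.Gamma ((m : ℝ) + 1/2)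

lemma Gm_pos (m : ℕ) : 0 < Gm m := Real.Gamma_pos_of_pos (by positivity)

lemma Gm_zero : Gm 0 = Real.sqrt Real.pi := by
  have h : ((0 : ℕ) : ℝ) + 1/2 = 1/2 := by norm_num
  rw [Gm, h, Real.Gamma_one_half_eq]

lemma Gm_succ (m : ℕ) : Gm (m + 1) = ((m : ℝ) + 1/2) * Gm m := by
  have h : ((m + 1 : ℕ) : ℝ) + 1/2 = ((m : ℝ) + 1/2) + 1 := by push_cast; ring
  rw [Gm, h, Real.Gamma_add_one (by positivity)]
  rfl

lemma sqrtpi_pos : 0 < Real.sqrt Real.pi := Real.sqrt_pos.mpr Real.pi_pos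

lemma gm_conv (j k : ℕ) : Gm j * Gm k ≤ Real.sqrt Real.pi * Gm (j + k) := by
  induction k with
  | zero => rw [Gm_zero]; ring_nf; rfl
  | succ k ih =>
    rw [Gm_succ, Nat.add_succ, Gm_succ]
    calc Gm j * (((k : ℝ) + 1/2) * Gm k) = ((k : ℝ) + 1/2) * (Gm j * Gm k) := by ring
    _ ≤ ((k : ℝ) + 1/2) * (Real.sqrt Real.pi * Gm (j + k)) := by
        exact mul_le_mul_of_nonneg_left ih (by positivity)
    _ ≤ (((j + k : ℕ) : ℝ) + 1/2) * (Real.sqrt Real.pi * Gm (j + k)) := by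
        apply mul_le_mul_of_nonneg_right _ (mul_nonneg (Real.sqrt_nonneg _) (Gm_pos _).le)
        push_cast; linarith [Nat.cast_nonneg (α := ℝ) j]
    _ = Real.sqrt Real.pi * ((((j + k : ℕ) : ℝ) + 1/2) * Gm (j + k)) := by ring

lemma gm_split : ∀ s l m : ℕ, l + m = s →
    Real.sqrt Real.pi * Gm (l + m) ≤ 2 ^ l * 4 ^ m * (Gm l * Gm m) := by
  intro s
  induction s with
  | zero =>
    intro l m h
    obtain ⟨rfl, rfl⟩ : l = 0 ∧ m = 0 := by omega
    rw [Gm_zero]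
    norm_num [Real.mul_self_sqrt Real.pi_pos.le]
  | succ s ih =>
    intro l m h
    match l, m with
    | 0, m =>
      rw [Gm_zero, zero_add]
      have h1 : (1 : ℝ) ≤ 4 ^ m := one_le_pow₀ (by norm_num)
      have := Gm_pos m
      calc Real.sqrt Real.pi * Gm m = 1 * (Real.sqrt Real.pi * Gm m) := by ring
        _ ≤ 4 ^ m * (Real.sqrt Real.pi * Gm m) := by
            apply mul_le_mul_of_nonneg_right h1 (by positivity)
        _ = 2 ^ 0 * 4 ^ m * (Real.sqrt Real.pi * Gm m) := by ring
    | l, 0 =>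
      rw [Gm_zero, Nat.add_zero]
      have h1 : (1 : ℝ) ≤ 2 ^ l := one_le_pow₀ (by norm_num)
      have := Gm_pos l
      calc Real.sqrt Real.pi * Gm l = 1 * (Gm l * Real.sqrt Real.pi) := by ring
        _ ≤ 2 ^ l * (Gm l * Real.sqrt Real.pi) := by
            apply mul_le_mul_of_nonneg_right h1 (by positivity)
        _ = 2 ^ l * 4 ^ 0 * (Gm l * Real.sqrt Real.pi) := by ring
    | l + 1, m + 1 =>
      have h1 : l + (m + 1) = s := by omega
      have h2 : (l + 1) + m = s := by omega
      have ih1 := ih l (m + 1) h1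
      have ih2 := ih (l + 1) m h2
      have key : Gm ((l + 1) + (m + 1)) =
          ((l : ℝ) + 1/2) * Gm (l + (m + 1)) + ((m : ℝ) + 1) * Gm ((l + 1) + m) := by
        have e1 : (l + 1) + (m + 1) = (l + (m + 1)) + 1 := by omega
        have e2 : (l + 1) + m = l + (m + 1) := by omega
        rw [e1, Gm_succ, e2]
        push_cast
        ring
      have hGl : Gm (l + 1) = ((l : ℝ) + 1/2) * Gm l := Gm_succ l
      have hGm : Gm (m + 1) = ((m : ℝ) + 1/2) * Gm m := Gm_succ m
      have hm2 : ((m : ℝ) + 1) * Gm m ≤ 2 * Gm (m + 1) := by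
        rw [hGm]
        nlinarith [Gm_pos m, Nat.cast_nonneg (α := ℝ) m]
      have t1 : ((l : ℝ) + 1/2) * (Real.sqrt Real.pi * Gm (l + (m + 1)))
          ≤ 2 ^ l * 4 ^ (m + 1) * (Gm (l + 1) * Gm (m + 1)) := by
        calc ((l : ℝ) + 1/2) * (Real.sqrt Real.pi * Gm (l + (m + 1)))
            ≤ ((l : ℝ) + 1/2) * (2 ^ l * 4 ^ (m + 1) * (Gm l * Gm (m + 1))) :=
              mul_le_mul_of_nonneg_left ih1 (by positivity)
          _ = 2 ^ l * 4 ^ (m + 1) * ((((l : ℝ) + 1/2) * Gm l) * Gm (m + 1)) := by ring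
          _ = 2 ^ l * 4 ^ (m + 1) * (Gm (l + 1) * Gm (m + 1)) := by rw [hGl]
      have t2 : ((m : ℝ) + 1) * (Real.sqrt Real.pi * Gm ((l + 1) + m))
          ≤ 2 * (2 ^ (l + 1) * 4 ^ m) * (Gm (l + 1) * Gm (m + 1)) := by
        calc ((m : ℝ) + 1) * (Real.sqrt Real.pi * Gm ((l + 1) + m))
            ≤ ((m : ℝ) + 1) * (2 ^ (l + 1) * 4 ^ m * (Gm (l + 1) * Gm m)) :=
              mul_le_mul_of_nonneg_left ih2 (by positivity)
          _ = (2 ^ (l + 1) * 4 ^ m) * Gm (l + 1) * (((m : ℝ) + 1) * Gm m) := by ring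
          _ ≤ (2 ^ (l + 1) * 4 ^ m) * Gm (l + 1) * (2 * Gm (m + 1)) := by
              refine mul_le_mul_of_nonneg_left hm2 ?_
              have := (Gm_pos (l+1)).le
              positivity
          _ = 2 * (2 ^ (l + 1) * 4 ^ m) * (Gm (l + 1) * Gm (m + 1)) := by ring
      calc Real.sqrt Real.pi * Gm ((l + 1) + (m + 1))
          = ((l : ℝ) + 1/2) * (Real.sqrt Real.pi * Gm (l + (m + 1)))
            + ((m : ℝ) + 1) * (Real.sqrt Real.pi * Gm ((l + 1) + m)) := by rw [key]; ring
        _ ≤ 2 ^ l * 4 ^ (m + 1) * (Gm (l + 1) * Gm (m + 1))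
            + 2 * (2 ^ (l + 1) * 4 ^ m) * (Gm (l + 1) * Gm (m + 1)) := add_le_add t1 t2
        _ = 2 ^ (l + 1) * 4 ^ (m + 1) * (Gm (l + 1) * Gm (m + 1)) := by ring

lemma gm_reflect (m : ℕ) : |Real.Gamma (-(m : ℝ) + 1/2)| * Gm m = Real.pi := by
  have h := Real.Gamma_mul_Gamma_one_sub ((m : ℝ) + 1/2)
  have harg : 1 - ((m : ℝ) + 1/2) = -(m : ℝ) + 1/2 := by ring
  have hsin : Real.sin (Real.pi * ((m : ℝ) + 1/2)) = (-1) ^ m := by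
    have h2 : Real.pi * ((m : ℝ) + 1/2) = (m : ℝ) * Real.pi + Real.pi/2 := by ring
    rw [h2, Real.sin_add, Real.sin_nat_mul_pi, Real.cos_pi_div_two, Real.sin_pi_div_two]
    have := Real.cos_nat_mul_pi_sub 0 m
    simpa using this
  rw [harg, hsin] at h
  have habs := congrArg abs h
  rw [abs_mul, abs_div] at habs
  have h1 : |Real.Gamma ((m : ℝ) + 1/2)| = Gm m := abs_of_pos (Gm_pos m)
  rw [h1] at habs
  have h2 : |(-1 : ℝ) ^ m| = 1 := by
    rw [abs_pow]; simp
  rw [h2, div_one, abs_of_pos Real.pi_pos] at habs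
  linarith [habs]
noncomputable def Dd (j : ℤ) : ℝ := |Real.Gamma ((j : ℝ) + 1/2)|

lemma Dd_pos (j : ℤ) : 0 < Dd j := by
  rw [Dd, abs_pos]
  apply Real.Gamma_ne_zero
  intro m hm
  have h2 : (2 * j + 1 : ℝ) = (-(2 * m) : ℤ) := by push_cast; linarith
  have h3 : (2 * j + 1 : ℤ) = -(2 * (m : ℤ)) := by exact_mod_cast h2
  omega

lemma Dd_natCast (m : ℕ) : Dd (m : ℤ) = Gm m := by
  rw [Dd, Gm]
  push_cast
  exact abs_of_pos (Real.Gamma_pos_of_pos (by positivity))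

lemma Dd_neg_natCast (m : ℕ) : Dd (-(m : ℤ)) * Gm m = Real.pi := by
  rw [Dd]
  push_cast
  exact gm_reflect m

lemma two_le_exp_one : (2 : ℝ) ≤ Real.exp 1 := by
  have := Real.add_one_le_exp 1
  linarith

lemma pow_le_exp_l (l : ℕ) : (2 : ℝ) ^ l ≤ Real.exp l := by
  calc (2 : ℝ) ^ l ≤ (Real.exp 1) ^ l := pow_le_pow_left₀ (by norm_num) two_le_exp_one l
    _ = Real.exp l := by rw [← Real.exp_nat_mul]; norm_num

lemma pow_le_exp_m (m : ℕ) : (4 : ℝ) ^ m ≤ Real.exp (2 * m) := by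
  have h4 : (4 : ℝ) ≤ Real.exp 2 := by
    have : Real.exp 2 = Real.exp 1 * Real.exp 1 := by rw [← Real.exp_add]; norm_num
    nlinarith [two_le_exp_one]
  calc (4 : ℝ) ^ m ≤ (Real.exp 2) ^ m := pow_le_pow_left₀ (by norm_num) h4 m
    _ = Real.exp (2 * m) := by rw [← Real.exp_nat_mul]; ring_nf

/-- asymmetric case: j = -m < 0 ≤ k, j + k = l ≥ 0 -/
lemma kernel_neg (m l : ℕ) :
    Dd (-(m : ℤ)) * Dd ((l : ℤ) + (m : ℤ)) ≤
      Real.sqrt Real.pi * Real.exp ((m : ℝ) + ((l : ℝ) + (m : ℝ))) * Dd (l : ℤ) := by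
  have hc : ((l : ℤ) + (m : ℤ)) = ((l + m : ℕ) : ℤ) := by push_cast; ring
  rw [hc, Dd_natCast, Dd_natCast]
  have hsplit := gm_split (l + m) l m rfl
  have hrefl := Dd_neg_natCast m
  have hGm := Gm_pos m
  have hGl := Gm_pos l
  have hDn : Dd (-(m : ℤ)) = Real.pi / Gm m := by
    field_simp [hGm.ne'] at hrefl ⊢
    linarith [hrefl]
  rw [hDn]
  have hexp : (2 : ℝ) ^ l * 4 ^ m ≤ Real.exp ((m : ℝ) + ((l : ℝ) + (m : ℝ))) := by
    have h1 := pow_le_exp_l l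
    have h2 := pow_le_exp_m m
    have h3 : Real.exp ((m : ℝ) + ((l : ℝ) + (m : ℝ))) = Real.exp l * Real.exp (2 * m) := by
      rw [← Real.exp_add]; ring_nf
    rw [h3]
    have e1 : (0:ℝ) ≤ (2:ℝ)^l := by positivity
    have e2 : (0:ℝ) < Real.exp (l : ℝ) := Real.exp_pos _
    nlinarith [Real.exp_pos (2 * (m:ℝ))]
  -- goal: π / Gm m * Gm (l + m) ≤ √π * exp(..) * Gm l
  rw [div_mul_eq_mul_div, div_le_iff₀ hGm]
  -- π * Gm (l+m) ≤ √π * exp * Gm l * Gm m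
  have hpi : Real.pi = Real.sqrt Real.pi * Real.sqrt Real.pi := (Real.mul_self_sqrt Real.pi_pos.le).symm
  calc Real.pi * Gm (l + m) = Real.sqrt Real.pi * (Real.sqrt Real.pi * Gm (l + m)) := by
        conv_lhs => rw [← Real.mul_self_sqrt Real.pi_pos.le]
        ring
    _ ≤ Real.sqrt Real.pi * (2 ^ l * 4 ^ m * (Gm l * Gm m)) :=
        mul_le_mul_of_nonneg_left hsplit sqrtpi_pos.le
    _ ≤ Real.sqrt Real.pi * (Real.exp ((m : ℝ) + ((l : ℝ) + (m : ℝ))) * (Gm l * Gm m)) := by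
        apply mul_le_mul_of_nonneg_left _ sqrtpi_pos.le
        exact mul_le_mul_of_nonneg_right hexp (mul_nonneg hGl.le hGm.le)
    _ = Real.sqrt Real.pi * Real.exp ((m : ℝ) + ((l : ℝ) + (m : ℝ))) * Gm l * Gm m := by ring

/-- Master kernel bound. -/
lemma kernel (j k : ℤ) (h : 0 ≤ j + k) :
    Dd j * Dd k ≤ Real.sqrt Real.pi * Real.exp (|(j : ℝ)| + |(k : ℝ)|) * Dd (j + k) := by
  have hDjk := Dd_pos (j + k)
  rcases le_or_gt 0 j with hj | hj
  · rcases le_or_gt 0 k with hk | hk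
    · -- both nonneg
      lift j to ℕ using hj
      lift k to ℕ using hk
      have hc : (j : ℤ) + (k : ℤ) = ((j + k : ℕ) : ℤ) := by push_cast; ring
      rw [hc, Dd_natCast, Dd_natCast, Dd_natCast]
      have h1 := gm_conv j k
      have habs : |((j : ℤ) : ℝ)| + |((k : ℤ) : ℝ)| = (j : ℝ) + (k : ℝ) := by
        push_cast; rw [abs_of_nonneg (by positivity), abs_of_nonneg (by positivity)]
      rw [habs]
      have hexp : (1 : ℝ) ≤ Real.exp ((j : ℝ) + (k : ℝ)) := Real.one_le_exp (by positivity)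
      calc Gm j * Gm k ≤ Real.sqrt Real.pi * Gm (j + k) := h1
        _ = 1 * (Real.sqrt Real.pi * Gm (j + k)) := by ring
        _ ≤ Real.exp ((j : ℝ) + (k : ℝ)) * (Real.sqrt Real.pi * Gm (j + k)) :=
            mul_le_mul_of_nonneg_right hexp (mul_nonneg sqrtpi_pos.le (Gm_pos _).le)
        _ = Real.sqrt Real.pi * Real.exp ((j : ℝ) + (k : ℝ)) * Gm (j + k) := by ring
    · -- j ≥ 0, k < 0 : use kernel_neg with roles of j,k swapped
      set m : ℕ := (-k).toNat with hm
      set l : ℕ := (j + k).toNat with hl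
      have hk' : k = -(m : ℤ) := by omega
      have hj' : j = (l : ℤ) + (m : ℤ) := by omega
      have hjk : j + k = (l : ℤ) := by omega
      have := kernel_neg m l
      rw [hjk, hj', hk']
      have habs : |((((l:ℤ) + (m:ℤ)) : ℤ) : ℝ)| + |((-(m:ℤ) : ℤ) : ℝ)|
          = (m : ℝ) + ((l : ℝ) + (m : ℝ)) := by
        push_cast
        rw [abs_of_nonneg (by positivity), abs_neg, abs_of_nonneg (by positivity)]
        ring
      rw [habs]
      calc Dd ((l:ℤ) + (m:ℤ)) * Dd (-(m:ℤ)) = Dd (-(m : ℤ)) * Dd ((l : ℤ) + (m : ℤ)) := by ring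
        _ ≤ Real.sqrt Real.pi * Real.exp ((m : ℝ) + ((l : ℝ) + (m : ℝ))) * Dd (l : ℤ) := this
  · rcases le_or_gt 0 k with hk | hk
    · -- j < 0 ≤ k
      set m : ℕ := (-j).toNat with hm
      set l : ℕ := (j + k).toNat with hl
      have hj' : j = -(m : ℤ) := by omega
      have hk' : k = (l : ℤ) + (m : ℤ) := by omega
      have hjk : j + k = (l : ℤ) := by omega
      have := kernel_neg m l
      rw [hjk, hj', hk']
      have habs : |((-(m:ℤ) : ℤ) : ℝ)| + |((((l:ℤ) + (m:ℤ)) : ℤ) : ℝ)|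
          = (m : ℝ) + ((l : ℝ) + (m : ℝ)) := by
        push_cast
        rw [abs_neg, abs_of_nonneg (by positivity), abs_of_nonneg (by positivity)]
      rw [habs]
      exact this
    · omega

/-- Final pointwise real inequality. -/
lemma pointwise_real (n : ℤ) (j k : ℤ) (h : 0 ≤ j + k) :
    Real.exp (((n : ℝ) - 1) * ((j : ℝ) + (k : ℝ))) / Dd (j + k) ≤
      (Real.exp ((n : ℝ) * j + 2 * |(j : ℝ)|) / Dd j) *
        (Real.exp ((n : ℝ) * k + 2 * |(k : ℝ)|) / Dd k) *
          (Real.sqrt Real.pi * Real.exp (-(((j : ℝ) + (k : ℝ)) + |(j : ℝ)| + |(k : ℝ)|))) := by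
  have hDj := Dd_pos j
  have hDk := Dd_pos k
  have hDl := Dd_pos (j + k)
  have hker := kernel j k h
  rw [div_mul_div_comm, div_mul_eq_mul_div, div_le_div_iff₀ hDl (by positivity)]
  have hexp3 : Real.exp ((n : ℝ) * j + 2 * |(j : ℝ)|) * Real.exp ((n : ℝ) * k + 2 * |(k : ℝ)|)
      * Real.exp (-(((j : ℝ) + (k : ℝ)) + |(j : ℝ)| + |(k : ℝ)|))
      = Real.exp ((((n : ℝ) - 1) * ((j : ℝ) + (k : ℝ))) + (|(j : ℝ)| + |(k : ℝ)|)) := by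
    rw [← Real.exp_add, ← Real.exp_add]
    congr 1
    ring
  have hcomb : Real.exp ((n : ℝ) * j + 2 * |(j : ℝ)|) * Real.exp ((n : ℝ) * k + 2 * |(k : ℝ)|) *
      (Real.sqrt Real.pi * Real.exp (-(((j : ℝ) + (k : ℝ)) + |(j : ℝ)| + |(k : ℝ)|)))
      = Real.sqrt Real.pi * (Real.exp (((n : ℝ) - 1) * ((j : ℝ) + (k : ℝ)))
          * Real.exp (|(j : ℝ)| + |(k : ℝ)|)) := by
    rw [← Real.exp_add (((n : ℝ) - 1) * ((j : ℝ) + (k : ℝ))), ← hexp3]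
    ring
  rw [hcomb]
  calc Real.exp (((n : ℝ) - 1) * ((j : ℝ) + (k : ℝ))) * (Dd j * Dd k)
      ≤ Real.exp (((n : ℝ) - 1) * ((j : ℝ) + (k : ℝ)))
        * (Real.sqrt Real.pi * Real.exp (|(j : ℝ)| + |(k : ℝ)|) * Dd (j + k)) :=
        mul_le_mul_of_nonneg_left hker (Real.exp_pos _).le
    _ = Real.sqrt Real.pi * (Real.exp (((n : ℝ) - 1) * ((j : ℝ) + (k : ℝ)))
          * Real.exp (|(j : ℝ)| + |(k : ℝ)|)) * Dd (j + k) := by ring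

/- ## ENNReal utilities -/

lemma rpow_half_sq (u : ℝ≥0∞) : (u ^ (1/2 : ℝ)) ^ 2 = u := by
  rw [← ENNReal.rpow_natCast (u ^ (1/2 : ℝ)) 2, ← ENNReal.rpow_mul]
  norm_num

lemma sq_rpow_half (u : ℝ≥0∞) : (u ^ 2) ^ (1/2 : ℝ) = u := by
  rw [← ENNReal.rpow_natCast u 2, ← ENNReal.rpow_mul]
  norm_num

lemma ennreal_amgm (x y : ℝ≥0∞) : 2 * (x * y) ≤ x ^ 2 + y ^ 2 := by
  rcases eq_or_ne x ⊤ with rfl | hxt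
  · have h : (⊤ : ℝ≥0∞) ^ 2 + y ^ 2 = ⊤ := by simp [ENNReal.top_pow]
    rw [h]; exact le_top
  rcases eq_or_ne y ⊤ with rfl | hyt
  · have h : x ^ 2 + (⊤ : ℝ≥0∞) ^ 2 = ⊤ := by simp [ENNReal.top_pow]
    rw [h]; exact le_top
  lift x to ℝ≥0 using hxt
  lift y to ℝ≥0 using hyt
  have hr : 2 * ((x : ℝ≥0) * y) ≤ x ^ 2 + y ^ 2 := by
    rw [← NNReal.coe_le_coe]
    push_cast
    nlinarith [two_mul_le_add_sq (x : ℝ) (y : ℝ)]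
  exact_mod_cast hr

lemma ennreal_cs (f g : ℤ → ℝ≥0∞) :
    (∑' j, f j * g j) ^ 2 ≤ (∑' j, (f j) ^ 2) * (∑' j, (g j) ^ 2) := by
  have expand : (∑' j, f j * g j) ^ 2 = ∑' i, ∑' j, (f i * g i) * (f j * g j) := by
    rw [sq, ← ENNReal.tsum_mul_right]
    congr 1
    funext i
    rw [ENNReal.tsum_mul_left]
  have key : 2 * (∑' j, f j * g j) ^ 2 ≤ 2 * ((∑' j, (f j) ^ 2) * (∑' j, (g j) ^ 2)) := by
    rw [expand, ← ENNReal.tsum_mul_left]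
    calc ∑' i, 2 * ∑' j, (f i * g i) * (f j * g j)
        = ∑' i, ∑' j, 2 * ((f i * g j) * (f j * g i)) := by
          congr 1; funext i
          rw [← ENNReal.tsum_mul_left]
          congr 1; funext j
          ring
      _ ≤ ∑' i, ∑' j, ((f i * g j) ^ 2 + (f j * g i) ^ 2) := by
          exact ENNReal.tsum_le_tsum fun i => ENNReal.tsum_le_tsum fun j => ennreal_amgm _ _
      _ = (∑' i, ∑' j, (f i * g j) ^ 2) + ∑' i, ∑' j, (f j * g i) ^ 2 := by
          rw [← ENNReal.tsum_add]
          congr 1; funext i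
          rw [ENNReal.tsum_add]
      _ = 2 * ((∑' j, (f j) ^ 2) * (∑' j, (g j) ^ 2)) := by
          have h1 : (∑' (i : ℤ), ∑' (j : ℤ), (f i * g j) ^ 2)
              = (∑' j, (f j) ^ 2) * (∑' j, (g j) ^ 2) := by
            calc ∑' (i : ℤ), ∑' (j : ℤ), (f i * g j) ^ 2
                = ∑' (i : ℤ), (f i) ^ 2 * ∑' (j : ℤ), (g j) ^ 2 := by
                  congr 1; funext i
                  rw [← ENNReal.tsum_mul_left]
                  congr 1; funext j; ring
              _ = (∑' j, (f j) ^ 2) * (∑' j, (g j) ^ 2) := ENNReal.tsum_mul_right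
          have h2 : (∑' (i : ℤ), ∑' (j : ℤ), (f j * g i) ^ 2)
              = (∑' j, (f j) ^ 2) * (∑' j, (g j) ^ 2) := by
            rw [ENNReal.tsum_comm]
            calc ∑' (j : ℤ), ∑' (i : ℤ), (f j * g i) ^ 2
                = ∑' (j : ℤ), (f j) ^ 2 * ∑' (i : ℤ), (g i) ^ 2 := by
                  congr 1; funext j
                  rw [← ENNReal.tsum_mul_left]
                  congr 1; funext i; ring
              _ = (∑' j, (f j) ^ 2) * (∑' j, (g j) ^ 2) := ENNReal.tsum_mul_right
          rw [h1, h2, two_mul]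
  exact (ENNReal.mul_le_mul_iff_right (by norm_num) (by norm_num)).mp key

lemma ennreal_wcs (κ z : ℤ → ℝ≥0∞) :
    (∑' j, κ j * z j) ^ 2 ≤ (∑' j, κ j) * (∑' j, κ j * (z j) ^ 2) := by
  have h := ennreal_cs (fun j => (κ j) ^ (1/2 : ℝ)) (fun j => (κ j) ^ (1/2 : ℝ) * z j)
  try simp only at h
  have e1 : ∀ j, (κ j) ^ (1/2 : ℝ) * ((κ j) ^ (1/2 : ℝ) * z j) = κ j * z j := by
    intro j
    rw [← mul_assoc, ← sq, rpow_half_sq]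
  have e2 : ∀ j, (((κ j) ^ (1/2 : ℝ)) : ℝ≥0∞) ^ 2 = κ j := fun j => rpow_half_sq _
  have e3 : ∀ j, ((κ j) ^ (1/2 : ℝ) * z j) ^ 2 = κ j * (z j) ^ 2 := by
    intro j
    rw [mul_pow, rpow_half_sq]
  simp only [e1, e2, e3] at h
  exact h

lemma enorm_tsum_le (f : ℤ → ℂ) :
    ENNReal.ofReal ‖∑' j, f j‖ ≤ ∑' j, ENNReal.ofReal ‖f j‖ := by
  by_cases hf : Summable f
  · have hs : Summable fun j => ‖f j‖ := summable_norm_iff.mpr hf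
    calc ENNReal.ofReal ‖∑' j, f j‖ ≤ ENNReal.ofReal (∑' j, ‖f j‖) :=
        ENNReal.ofReal_le_ofReal (norm_tsum_le_tsum_norm hs)
      _ = ∑' j, ENNReal.ofReal ‖f j‖ :=
        ENNReal.ofReal_tsum_of_nonneg (fun _ => norm_nonneg _) hs
  · rw [tsum_eq_zero_of_not_summable hf]
    simp

lemma exp_neg_le_half_pow (m : ℕ) :
    ENNReal.ofReal (Real.exp (-(m : ℝ))) ≤ (2⁻¹ : ℝ≥0∞) ^ m := by
  have h1 : Real.exp (-(m : ℝ)) = (Real.exp (-1)) ^ m := by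
    rw [← Real.exp_nat_mul]
    congr 1
    ring
  have h2 : Real.exp (-1) ≤ 1/2 := by
    rw [Real.exp_neg]
    rw [inv_le_comm₀ (Real.exp_pos 1) (by norm_num)]
    calc (1/2 : ℝ)⁻¹ = 2 := by norm_num
      _ ≤ Real.exp 1 := two_le_exp_one
  have h3 : ENNReal.ofReal ((1/2 : ℝ) ^ m) = (2⁻¹ : ℝ≥0∞) ^ m := by
    rw [ENNReal.ofReal_pow (by norm_num)]
    congr 1
    rw [show (1/2 : ℝ) = (2 : ℝ)⁻¹ by norm_num,
      ENNReal.ofReal_inv_of_pos (by norm_num)]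
    norm_num
  calc ENNReal.ofReal (Real.exp (-(m : ℝ)))
      ≤ ENNReal.ofReal ((1/2 : ℝ) ^ m) := by
        apply ENNReal.ofReal_le_ofReal
        rw [h1]
        exact pow_le_pow_left₀ (Real.exp_pos _).le h2 m
    _ = (2⁻¹ : ℝ≥0∞) ^ m := h3

lemma geo_bound : ∑' j : ℤ, ENNReal.ofReal (Real.exp (-|(j : ℝ)|)) ≤ 3 := by
  set g : ℤ → ℝ≥0∞ := fun j => ENNReal.ofReal (Real.exp (-|(j : ℝ)|)) with hg
  have hsplit : (∑' j : ℤ, g j) = (∑' n : ℕ, g n) + ∑' n : ℕ, g (-(n + 1)) :=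
    (HasSum.of_nat_of_neg_add_one ENNReal.summable.hasSum ENNReal.summable.hasSum).tsum_eq
  have hhalf : ∑' n : ℕ, (2⁻¹ : ℝ≥0∞) ^ n = 2 := by
    rw [ENNReal.tsum_geometric, ENNReal.one_sub_inv_two, inv_inv]
  have h1 : (∑' n : ℕ, g n) ≤ 2 := by
    calc (∑' n : ℕ, g n)
        ≤ ∑' n : ℕ, (2⁻¹ : ℝ≥0∞) ^ n := by
          apply ENNReal.tsum_le_tsum
          intro m
          have hm : |((m : ℤ) : ℝ)| = (m : ℝ) := by
            push_cast; exact abs_of_nonneg (by positivity)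
          rw [hg]
          simp only [hm]
          exact exp_neg_le_half_pow m
      _ = 2 := hhalf
  have h2 : (∑' n : ℕ, g (-(n + 1))) ≤ 1 := by
    calc (∑' n : ℕ, g (-(n + 1)))
        ≤ ∑' n : ℕ, (2⁻¹ : ℝ≥0∞) ^ (n + 1) := by
          apply ENNReal.tsum_le_tsum
          intro m
          have hcast : |((-(m + 1) : ℤ) : ℝ)| = ((m + 1 : ℕ) : ℝ) := by
            push_cast
            rw [abs_neg, abs_of_nonneg (by positivity)]
          rw [hg]
          simp only [hcast]
          exact exp_neg_le_half_pow (m + 1)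
      _ = 2⁻¹ * ∑' n : ℕ, (2⁻¹ : ℝ≥0∞) ^ n := by
          rw [← ENNReal.tsum_mul_left]
          congr 1; funext n; rw [pow_succ]; ring
      _ = 2⁻¹ * 2 := by rw [hhalf]
      _ = 1 := ENNReal.inv_mul_cancel (by norm_num) (by norm_num)
  calc (∑' j : ℤ, g j) = (∑' n : ℕ, g n) + ∑' n : ℕ, g (-(n + 1)) := hsplit
    _ ≤ 2 + 1 := add_le_add h1 h2
    _ = 3 := by norm_num

/-- Bridge between the `wnorm` summand and a square. -/
lemma term_sq (ν : ℤ) (z : ℂ) (j : ℤ) :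
    ENNReal.ofReal (‖z‖ ^ 2 * Real.exp (2 * (ν : ℝ) * (j : ℝ)) /
        ‖Complex.Gamma ((j : ℂ) + 1 / 2)‖ ^ 2)
      = (ENNReal.ofReal (‖z‖ * (Real.exp ((ν : ℝ) * (j : ℝ)) / Dd j))) ^ 2 := by
  have hg : ‖Complex.Gamma ((j : ℂ) + 1 / 2)‖ = Dd j := by
    have h : ((j : ℂ) + 1 / 2) = (((j : ℝ) + 1 / 2 : ℝ) : ℂ) := by push_cast; ring
    rw [h, Complex.Gamma_ofReal, Complex.norm_real, Real.norm_eq_abs]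
    rfl
  rw [hg, ← ENNReal.ofReal_pow
    (mul_nonneg (norm_nonneg _) (div_nonneg (Real.exp_pos _).le (Dd_pos j).le))]
  congr 1
  have hexp : Real.exp (2 * (ν : ℝ) * (j : ℝ))
      = Real.exp ((ν : ℝ) * (j : ℝ)) * Real.exp ((ν : ℝ) * (j : ℝ)) := by
    rw [← Real.exp_add]; congr 1; ring
  rw [hexp]
  ring

lemma wnorm_sq (ν : ℤ) (a : ℤ → ℂ) :
    (wnorm ν a) ^ 2 = ∑' j : ℤ, ENNReal.ofReal
      (‖a j‖ ^ 2 * Real.exp (2 * (ν : ℝ) * (j : ℝ)) / ‖Complex.Gamma ((j : ℂ) + 1 / 2)‖ ^ 2) := by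
  rw [wnorm]
  exact rpow_half_sq _

/-- The mixed-weight sequence. -/
noncomputable def xw (n : ℤ) (a : ℤ → ℂ) (j : ℤ) : ℝ≥0∞ :=
  ENNReal.ofReal (‖a j‖ * (Real.exp ((n : ℝ) * (j : ℝ) + 2 * |(j : ℝ)|) / Dd j))

lemma weight_sum_le (n : ℤ) (a : ℤ → ℂ) :
    ∑' j : ℤ, (xw n a j) ^ 2 ≤ (wnorm (n + 2) a + wnorm (n - 2) a) ^ 2 := by
  have hpt : ∀ j : ℤ, (xw n a j) ^ 2 ≤
      ENNReal.ofReal (‖a j‖ ^ 2 * Real.exp (2 * ((n + 2 : ℤ) : ℝ) * (j : ℝ)) /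
        ‖Complex.Gamma ((j : ℂ) + 1 / 2)‖ ^ 2)
      + ENNReal.ofReal (‖a j‖ ^ 2 * Real.exp (2 * ((n - 2 : ℤ) : ℝ) * (j : ℝ)) /
        ‖Complex.Gamma ((j : ℂ) + 1 / 2)‖ ^ 2) := by
    intro j
    rcases le_or_gt 0 j with hj | hj
    · have habs : |(j : ℝ)| = (j : ℝ) := abs_of_nonneg (by exact_mod_cast hj)
      have harg : (n : ℝ) * (j : ℝ) + 2 * |(j : ℝ)| = ((n + 2 : ℤ) : ℝ) * (j : ℝ) := by
        rw [habs]; push_cast; ring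
      rw [xw, harg, ← term_sq]
      exact le_self_add
    · have habs : |(j : ℝ)| = -(j : ℝ) := abs_of_neg (by exact_mod_cast hj)
      have harg : (n : ℝ) * (j : ℝ) + 2 * |(j : ℝ)| = ((n - 2 : ℤ) : ℝ) * (j : ℝ) := by
        rw [habs]; push_cast; ring
      rw [xw, harg, ← term_sq]
      exact le_add_self
  calc ∑' j : ℤ, (xw n a j) ^ 2
      ≤ ∑' j : ℤ, (ENNReal.ofReal (‖a j‖ ^ 2 * Real.exp (2 * ((n + 2 : ℤ) : ℝ) * (j : ℝ)) /
          ‖Complex.Gamma ((j : ℂ) + 1 / 2)‖ ^ 2)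
        + ENNReal.ofReal (‖a j‖ ^ 2 * Real.exp (2 * ((n - 2 : ℤ) : ℝ) * (j : ℝ)) /
          ‖Complex.Gamma ((j : ℂ) + 1 / 2)‖ ^ 2)) := ENNReal.tsum_le_tsum hpt
    _ = (wnorm (n + 2) a) ^ 2 + (wnorm (n - 2) a) ^ 2 := by
        rw [ENNReal.tsum_add, wnorm_sq, wnorm_sq]
    _ ≤ (wnorm (n + 2) a + wnorm (n - 2) a) ^ 2 := by
        rw [add_sq]
        calc (wnorm (n + 2) a) ^ 2 + (wnorm (n - 2) a) ^ 2
            ≤ (wnorm (n + 2) a) ^ 2 + (2 * wnorm (n + 2) a * wnorm (n - 2) a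
              + (wnorm (n - 2) a) ^ 2) := add_le_add le_rfl le_add_self
          _ = (wnorm (n + 2) a) ^ 2 + 2 * wnorm (n + 2) a * wnorm (n - 2) a
              + (wnorm (n - 2) a) ^ 2 := by ring

lemma pointwise_real' (n l j : ℤ) (h : 0 ≤ l) :
    Real.exp (((n : ℝ) - 1) * (l : ℝ)) / Dd l ≤
      (Real.exp ((n : ℝ) * (j : ℝ) + 2 * |(j : ℝ)|) / Dd j) *
        (Real.exp ((n : ℝ) * ((l - j : ℤ) : ℝ) + 2 * |((l - j : ℤ) : ℝ)|) / Dd (l - j)) *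
          (Real.sqrt Real.pi *
            Real.exp (-((l : ℝ) + |(j : ℝ)| + |((l - j : ℤ) : ℝ)|))) := by
  have h0 : j + (l - j) = l := by ring
  have h7 := pointwise_real n j (l - j) (by omega)
  rw [h0] at h7
  have hsum : (j : ℝ) + ((l - j : ℤ) : ℝ) = (l : ℝ) := by push_cast; ring
  rw [hsum] at h7
  exact h7

/-- The per-`l` core estimate. -/
lemma per_l_bound (n : ℤ) (a b c : ℤ → ℂ)
    (hc : ∀ l : ℤ, c l = ∑' j : ℤ, a j * b (l - j)) (l : ℤ) :
    ENNReal.ofReal (‖posTrunc c l‖ ^ 2 * Real.exp (2 * ((n - 1 : ℤ) : ℝ) * (l : ℝ)) /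
        ‖Complex.Gamma ((l : ℂ) + 1 / 2)‖ ^ 2)
      ≤ (ENNReal.ofReal (Real.sqrt Real.pi) * 3 * ENNReal.ofReal (Real.sqrt Real.pi)) *
          ∑' j : ℤ, (xw n a j) ^ 2 * (xw n b (l - j)) ^ 2 := by
  rcases lt_or_ge l 0 with hl | hl
  · have h0 : posTrunc c l = 0 := if_neg (not_le.mpr hl)
    rw [h0]
    simp
  have hpt : posTrunc c l = c l := if_pos hl
  rw [hpt, term_sq (n - 1) (c l) l]
  have hcst : ((n - 1 : ℤ) : ℝ) = (n : ℝ) - 1 := by push_cast; ring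
  rw [hcst]
  set κ : ℤ → ℝ≥0∞ := fun j => ENNReal.ofReal (Real.sqrt Real.pi *
      Real.exp (-((l : ℝ) + |(j : ℝ)| + |((l - j : ℤ) : ℝ)|))) with hκ
  set z : ℤ → ℝ≥0∞ := fun j => xw n a j * xw n b (l - j) with hz
  have hgnn : (0:ℝ) ≤ Real.exp (((n : ℝ) - 1) * (l : ℝ)) / Dd l :=
    div_nonneg (Real.exp_pos _).le (Dd_pos l).le
  -- Step A : the truncated coefficient is dominated by the kernel sum
  have stepA : ENNReal.ofReal (‖c l‖ * (Real.exp (((n : ℝ) - 1) * (l : ℝ)) / Dd l))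
      ≤ ∑' j : ℤ, κ j * z j := by
    rw [ENNReal.ofReal_mul (norm_nonneg _)]
    calc ENNReal.ofReal ‖c l‖ * ENNReal.ofReal (Real.exp (((n : ℝ) - 1) * (l : ℝ)) / Dd l)
        ≤ (∑' j : ℤ, ENNReal.ofReal ‖a j * b (l - j)‖) *
            ENNReal.ofReal (Real.exp (((n : ℝ) - 1) * (l : ℝ)) / Dd l) := by
          apply mul_le_mul_left
          rw [hc l]
          exact enorm_tsum_le _
      _ = ∑' j : ℤ, ENNReal.ofReal ‖a j * b (l - j)‖ *
            ENNReal.ofReal (Real.exp (((n : ℝ) - 1) * (l : ℝ)) / Dd l) :=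
          ENNReal.tsum_mul_right.symm
      _ ≤ ∑' j : ℤ, κ j * z j := by
          apply ENNReal.tsum_le_tsum
          intro j
          rw [← ENNReal.ofReal_mul (norm_nonneg _), norm_mul]
          have hreal : ‖a j‖ * ‖b (l - j)‖ * (Real.exp (((n : ℝ) - 1) * (l : ℝ)) / Dd l)
              ≤ (Real.sqrt Real.pi *
                  Real.exp (-((l : ℝ) + |(j : ℝ)| + |((l - j : ℤ) : ℝ)|))) *
                ((‖a j‖ * (Real.exp ((n : ℝ) * (j : ℝ) + 2 * |(j : ℝ)|) / Dd j)) *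
                 (‖b (l - j)‖ * (Real.exp ((n : ℝ) * ((l - j : ℤ) : ℝ)
                    + 2 * |((l - j : ℤ) : ℝ)|) / Dd (l - j)))) := by
            have key := mul_le_mul_of_nonneg_left (pointwise_real' n l j hl)
              (mul_nonneg (norm_nonneg (a j)) (norm_nonneg (b (l - j))))
            calc ‖a j‖ * ‖b (l - j)‖ * (Real.exp (((n : ℝ) - 1) * (l : ℝ)) / Dd l)
                ≤ ‖a j‖ * ‖b (l - j)‖ *
                  ((Real.exp ((n : ℝ) * (j : ℝ) + 2 * |(j : ℝ)|) / Dd j) *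
                    (Real.exp ((n : ℝ) * ((l - j : ℤ) : ℝ)
                      + 2 * |((l - j : ℤ) : ℝ)|) / Dd (l - j)) *
                      (Real.sqrt Real.pi *
                        Real.exp (-((l : ℝ) + |(j : ℝ)| + |((l - j : ℤ) : ℝ)|)))) := key
              _ = _ := by ring
          calc ENNReal.ofReal (‖a j‖ * ‖b (l - j)‖ *
                (Real.exp (((n : ℝ) - 1) * (l : ℝ)) / Dd l))
              ≤ ENNReal.ofReal ((Real.sqrt Real.pi *
                  Real.exp (-((l : ℝ) + |(j : ℝ)| + |((l - j : ℤ) : ℝ)|))) *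
                ((‖a j‖ * (Real.exp ((n : ℝ) * (j : ℝ) + 2 * |(j : ℝ)|) / Dd j)) *
                 (‖b (l - j)‖ * (Real.exp ((n : ℝ) * ((l - j : ℤ) : ℝ)
                    + 2 * |((l - j : ℤ) : ℝ)|) / Dd (l - j))))) :=
                ENNReal.ofReal_le_ofReal hreal
            _ = κ j * z j := by
                rw [ENNReal.ofReal_mul (by positivity),
                  ENNReal.ofReal_mul (mul_nonneg (norm_nonneg _)
                    (div_nonneg (Real.exp_pos _).le (Dd_pos _).le))]
                rfl
  -- Step B/C/D : Cauchy-Schwarz and kernel bounds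
  have hrow : ∑' j : ℤ, κ j ≤ ENNReal.ofReal (Real.sqrt Real.pi) * 3 := by
    calc ∑' j : ℤ, κ j
        ≤ ∑' j : ℤ, ENNReal.ofReal (Real.sqrt Real.pi) *
            ENNReal.ofReal (Real.exp (-|(j : ℝ)|)) := by
          apply ENNReal.tsum_le_tsum
          intro j
          rw [hκ, ← ENNReal.ofReal_mul (Real.sqrt_nonneg _)]
          apply ENNReal.ofReal_le_ofReal
          apply mul_le_mul_of_nonneg_left _ (Real.sqrt_nonneg _)
          apply Real.exp_le_exp.mpr
          have h1 : (0:ℝ) ≤ (l : ℝ) := by exact_mod_cast hl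
          have h2 : (0:ℝ) ≤ |((l - j : ℤ) : ℝ)| := abs_nonneg _
          linarith
      _ = ENNReal.ofReal (Real.sqrt Real.pi) *
            ∑' j : ℤ, ENNReal.ofReal (Real.exp (-|(j : ℝ)|)) := ENNReal.tsum_mul_left
      _ ≤ ENNReal.ofReal (Real.sqrt Real.pi) * 3 :=
          mul_le_mul_right geo_bound _
  have hsup : ∀ j : ℤ, κ j * (z j) ^ 2 ≤ ENNReal.ofReal (Real.sqrt Real.pi) * (z j) ^ 2 := by
    intro j
    apply mul_le_mul_left
    rw [hκ]
    apply ENNReal.ofReal_le_ofReal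
    have h1 : (0:ℝ) ≤ (l : ℝ) := by exact_mod_cast hl
    have hle1 : Real.exp (-((l : ℝ) + |(j : ℝ)| + |((l - j : ℤ) : ℝ)|)) ≤ 1 := by
      apply Real.exp_le_one_iff.mpr
      have h2 : (0:ℝ) ≤ |(j : ℝ)| := abs_nonneg _
      have h3 : (0:ℝ) ≤ |((l - j : ℤ) : ℝ)| := abs_nonneg _
      linarith
    calc Real.sqrt Real.pi * Real.exp (-((l : ℝ) + |(j : ℝ)| + |((l - j : ℤ) : ℝ)|))
        ≤ Real.sqrt Real.pi * 1 := mul_le_mul_of_nonneg_left hle1 (Real.sqrt_nonneg _)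
      _ = Real.sqrt Real.pi := mul_one _
  calc (ENNReal.ofReal (‖c l‖ * (Real.exp (((n : ℝ) - 1) * (l : ℝ)) / Dd l))) ^ 2
      ≤ (∑' j : ℤ, κ j * z j) ^ 2 := pow_le_pow_left' stepA 2
    _ ≤ (∑' j : ℤ, κ j) * ∑' j : ℤ, κ j * (z j) ^ 2 := ennreal_wcs κ z
    _ ≤ (ENNReal.ofReal (Real.sqrt Real.pi) * 3) *
          ∑' j : ℤ, ENNReal.ofReal (Real.sqrt Real.pi) * (z j) ^ 2 :=
        mul_le_mul' hrow (ENNReal.tsum_le_tsum hsup)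
    _ = (ENNReal.ofReal (Real.sqrt Real.pi) * 3 * ENNReal.ofReal (Real.sqrt Real.pi)) *
          ∑' j : ℤ, (z j) ^ 2 := by
        rw [ENNReal.tsum_mul_left]
        ring
    _ = (ENNReal.ofReal (Real.sqrt Real.pi) * 3 * ENNReal.ofReal (Real.sqrt Real.pi)) *
          ∑' j : ℤ, (xw n a j) ^ 2 * (xw n b (l - j)) ^ 2 := by
        congr 1
        congr 1
        funext j
        rw [hz, mul_pow]

/-- If `‖a‖_{n+2} + ‖a‖_{n-2} < ∞` and `‖b‖_{n+2} + ‖b‖_{n-2} < ∞`,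
and `c_l := Σ_{j∈ℤ} a_j b_{l-j}`, then
`‖[c]₊‖_{n-1} ≤ 5 · (‖a‖_{n+2} + ‖a‖_{n-2}) · (‖b‖_{n+2} + ‖b‖_{n-2})`. -/
theorem posTrunc_product_estimate (n : ℤ) (a b : ℤ → ℂ)
    (ha : wnorm (n + 2) a + wnorm (n - 2) a < ⊤)
    (hb : wnorm (n + 2) b + wnorm (n - 2) b < ⊤)
    (c : ℤ → ℂ) (hc : ∀ l : ℤ, c l = ∑' j : ℤ, a j * b (l - j)) :
    wnorm (n - 1) (posTrunc c) ≤
      5 * (wnorm (n + 2) a + wnorm (n - 2) a) * (wnorm (n + 2) b + wnorm (n - 2) b) := by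
  set P := wnorm (n + 2) a + wnorm (n - 2) a with hP
  set Q := wnorm (n + 2) b + wnorm (n - 2) b with hQ
  set C : ℝ≥0∞ := ENNReal.ofReal (Real.sqrt Real.pi) * 3 * ENNReal.ofReal (Real.sqrt Real.pi)
    with hC
  have hXP : ∑' j : ℤ, (xw n a j) ^ 2 ≤ P ^ 2 := weight_sum_le n a
  have hYQ : ∑' j : ℤ, (xw n b j) ^ 2 ≤ Q ^ 2 := weight_sum_le n b
  have hswap : ∑' (l : ℤ), ∑' (j : ℤ), (xw n a j) ^ 2 * (xw n b (l - j)) ^ 2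
      = (∑' j : ℤ, (xw n a j) ^ 2) * (∑' j : ℤ, (xw n b j) ^ 2) := by
    rw [ENNReal.tsum_comm]
    calc ∑' (j : ℤ), ∑' (l : ℤ), (xw n a j) ^ 2 * (xw n b (l - j)) ^ 2
        = ∑' (j : ℤ), (xw n a j) ^ 2 * ∑' (l : ℤ), (xw n b (l - j)) ^ 2 := by
          congr 1; funext j; rw [ENNReal.tsum_mul_left]
      _ = ∑' (j : ℤ), (xw n a j) ^ 2 * ∑' (k : ℤ), (xw n b k) ^ 2 := by
          congr 1; funext j
          congr 1
          exact Equiv.tsum_eq (Equiv.subRight j) (fun k => (xw n b k) ^ 2)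
      _ = (∑' j : ℤ, (xw n a j) ^ 2) * (∑' j : ℤ, (xw n b j) ^ 2) := ENNReal.tsum_mul_right
  have hC25 : C ≤ 25 := by
    have hsq : Real.sqrt Real.pi ≤ 2 := by
      nlinarith [Real.sq_sqrt Real.pi_pos.le, Real.sqrt_nonneg Real.pi, Real.pi_le_four]
    have h2 : ENNReal.ofReal (Real.sqrt Real.pi) ≤ 2 := by
      calc ENNReal.ofReal (Real.sqrt Real.pi) ≤ ENNReal.ofReal 2 :=
          ENNReal.ofReal_le_ofReal hsq
        _ = 2 := ENNReal.ofReal_ofNat 2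
    calc C ≤ 2 * 3 * 2 := mul_le_mul' (mul_le_mul' h2 le_rfl) h2
      _ ≤ 25 := by norm_num
  have hT : (∑' l : ℤ, ENNReal.ofReal (‖posTrunc c l‖ ^ 2 *
        Real.exp (2 * ((n - 1 : ℤ) : ℝ) * (l : ℝ)) /
        ‖Complex.Gamma ((l : ℂ) + 1 / 2)‖ ^ 2))
      ≤ (5 * P * Q) ^ 2 := by
    calc (∑' l : ℤ, ENNReal.ofReal (‖posTrunc c l‖ ^ 2 *
          Real.exp (2 * ((n - 1 : ℤ) : ℝ) * (l : ℝ)) /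
          ‖Complex.Gamma ((l : ℂ) + 1 / 2)‖ ^ 2))
        ≤ ∑' l : ℤ, C * ∑' j : ℤ, (xw n a j) ^ 2 * (xw n b (l - j)) ^ 2 :=
          ENNReal.tsum_le_tsum (per_l_bound n a b c hc)
      _ = C * ∑' (l : ℤ), ∑' (j : ℤ), (xw n a j) ^ 2 * (xw n b (l - j)) ^ 2 :=
          ENNReal.tsum_mul_left
      _ = C * ((∑' j : ℤ, (xw n a j) ^ 2) * (∑' j : ℤ, (xw n b j) ^ 2)) := by rw [hswap]
      _ ≤ 25 * (P ^ 2 * Q ^ 2) := mul_le_mul' hC25 (mul_le_mul' hXP hYQ)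
      _ = (5 * P * Q) ^ 2 := by ring
  calc wnorm (n - 1) (posTrunc c)
      = (∑' l : ℤ, ENNReal.ofReal (‖posTrunc c l‖ ^ 2 *
          Real.exp (2 * ((n - 1 : ℤ) : ℝ) * (l : ℝ)) /
          ‖Complex.Gamma ((l : ℂ) + 1 / 2)‖ ^ 2)) ^ (1/2 : ℝ) := rfl
    _ ≤ ((5 * P * Q) ^ 2) ^ (1/2 : ℝ) := ENNReal.rpow_le_rpow hT (by norm_num)
    _ = 5 * P * Q := sq_rpow_half _
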